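/- arXiv:2108.13727 — 4 statements merged into one kernel-verified Lean document; each statement's English description precedes it below -/
import Mathlib

section
/- Let n = 3, q > −1 with p := 2q+3, β ∈ ℝ, and let (u,v) be a classical radial solution of −Δu = |u|^{2q+2}u + β|v|^{q+2}|u|^q u, −Δv = |v|^{2q+2}v + β|u|^{q+2}|v|^q v in ℝ³. Write 𝒰(r) = (u(r),v(r)) for the radial profiles and G(𝒰) := (1/(p+1))(|u|^{p+1} + |v|^{p+1} + 2β|uv|^{(p+1)/2}). Then for every R > 0 the Rellich–Pohozaev identity holds: ∫₀^R (5−p) G(𝒰(r)) r² dr = R³( 2G(𝒰(R)) + |𝒰'(R)|² + (1/R) 𝒰(R)·𝒰'(R) ), where 𝒰'(R)=(u'(R),v'(R)), |𝒰'|² = u'² + v'² and 𝒰·𝒰' = uu' + vv'. -/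
open Set

noncomputable section

/-- The Laplacian of `u : ℝ³ → ℝ`, as the sum of the pure second derivatives. -/
def laplacian (u : EuclideanSpace ℝ (Fin 3) → ℝ) (x : EuclideanSpace ℝ (Fin 3)) : ℝ :=
  ∑ i : Fin 3, iteratedFDeriv ℝ 2 u x ![EuclideanSpace.single i (1 : ℝ), EuclideanSpace.single i (1 : ℝ)]

/-- The nonlinearity `|a|^{2q+2} a + β |b|^{q+2} |a|^q a`. -/
def Fnl (q β a b : ℝ) : ℝ := |a| ^ (2 * q + 2) * a + β * |b| ^ (q + 2) * |a| ^ q * a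

/-- The potential `G(u,v) = (1/(p+1)) (|u|^{p+1} + |v|^{p+1} + 2β|uv|^{(p+1)/2})`. -/
def Gpot (p β a b : ℝ) : ℝ :=
  (1 / (p + 1)) * (|a| ^ (p + 1) + |b| ^ (p + 1) + 2 * β * |a * b| ^ ((p + 1) / 2))

open Filter

/-! ### Auxiliary lemmas -/

lemma abs_rpow_deriv {c : ℝ} (hc : 1 < c) (a : ℝ) :
    HasDerivAt (fun x : ℝ => |x| ^ c) (c * |a| ^ (c - 2) * a) a := by
  rcases lt_trichotomy a 0 with h | rfl | h
  · have h1 : HasDerivAt (fun x : ℝ => -x) (-1) a := (hasDerivAt_id a).neg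
    have : HasDerivAt (fun x : ℝ => (-x) ^ c) (c * (-a) ^ (c - 1) * (-1)) a :=
      (Real.hasDerivAt_rpow_const (p := c) (Or.inl (by linarith))).comp a h1
    have he : (fun x : ℝ => |x| ^ c) =ᶠ[nhds a] fun x => (-x) ^ c := by
      filter_upwards [Iio_mem_nhds h] with x hx
      rw [abs_of_neg hx]
    have := this.congr_of_eventuallyEq he
    refine this.congr_deriv ?_
    rw [abs_of_neg h, show c - 1 = (c-2) + 1 by ring,
      Real.rpow_add (by linarith : (0:ℝ) < -a), Real.rpow_one]
    ring
  · rw [mul_zero]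
    rw [hasDerivAt_iff_tendsto_slope]
    have hb : ∀ᶠ x in nhdsWithin (0:ℝ) {(0:ℝ)}ᶜ,
        ‖slope (fun x : ℝ => |x| ^ c) 0 x‖ ≤ |x| ^ (c - 1) := by
      filter_upwards [self_mem_nhdsWithin] with x hx
      have hx0 : x ≠ 0 := hx
      rw [slope_def_field, abs_zero, Real.zero_rpow (by positivity : c ≠ 0), sub_zero, sub_zero,
        div_eq_mul_inv, Real.norm_eq_abs, abs_mul, abs_inv,
        Real.abs_rpow_of_nonneg (abs_nonneg x), abs_abs,
        Real.rpow_sub (abs_pos.2 hx0), Real.rpow_one]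
      rw [div_eq_mul_inv]
    have hg : Tendsto (fun x : ℝ => |x| ^ (c - 1)) (nhdsWithin (0:ℝ) {(0:ℝ)}ᶜ) (nhds 0) := by
      have : ContinuousAt (fun x : ℝ => |x| ^ (c - 1)) 0 := by
        apply ContinuousAt.rpow_const (continuous_abs.continuousAt)
        right; linarith
      have h0 : |(0:ℝ)| ^ (c-1) = 0 := by
        rw [abs_zero, Real.zero_rpow (by intro hh; linarith [sub_eq_zero.mp hh])]
      have := this.tendsto
      rw [h0] at this
      exact this.mono_left nhdsWithin_le_nhds
    exact squeeze_zero_norm' hb hg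
  · have he : (fun x : ℝ => |x| ^ c) =ᶠ[nhds a] fun x => x ^ c := by
      filter_upwards [Ioi_mem_nhds h] with x hx
      rw [abs_of_pos hx]
    have := (Real.hasDerivAt_rpow_const (p := c) (Or.inl (ne_of_gt h))).congr_of_eventuallyEq he
    refine this.congr_deriv ?_
    rw [abs_of_pos h, show c - 1 = (c-2) + 1 by ring,
      Real.rpow_add h, Real.rpow_one]
    ring

lemma cont_abs_rpow {c : ℝ} (hc : 0 < c) : Continuous fun t : ℝ => |t| ^ c := by
  rw [continuous_iff_continuousAt]
  intro t
  exact continuous_abs.continuousAt.rpow_const (Or.inr hc.le)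

/-! ### Radial geometry -/

abbrev E3 := EuclideanSpace ℝ (Fin 3)

def e₀ : E3 := EuclideanSpace.single 0 1

def rad (u : E3 → ℝ) : ℝ → ℝ := fun t => u (t • e₀)

lemma norm_smul_e₀ (t : ℝ) : ‖t • e₀‖ = |t| := by
  rw [norm_smul, e₀, EuclideanSpace.norm_single, norm_one, mul_one, Real.norm_eq_abs]

lemma rad_eq {u : E3 → ℝ} {u₀ : ℝ → ℝ} (hurad : ∀ x, u x = u₀ ‖x‖) {t : ℝ} (ht : 0 ≤ t) :
    rad u t = u₀ t := by
  rw [rad, hurad, norm_smul_e₀, abs_of_nonneg ht]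

lemma rad_contDiff {u : E3 → ℝ} (hu2 : ContDiff ℝ 2 u) : ContDiff ℝ 2 (rad u) :=
  hu2.comp (ContinuousLinearMap.toSpanSingleton ℝ e₀).contDiff

lemma line_hasDerivAt {u : E3 → ℝ} (hu2 : ContDiff ℝ 2 u) (x v : E3) (s : ℝ) :
    HasDerivAt (fun t => u (x + t • v)) (fderiv ℝ u (x + s • v) v) s := by
  have hc : HasDerivAt (fun t : ℝ => x + t • v) v s := by
    simpa using ((hasDerivAt_id s).smul_const v).const_add x
  exact ((hu2.differentiable (by norm_num)).differentiableAt.hasFDerivAt).comp_hasDerivAt s hc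

lemma line_deriv2 {u : E3 → ℝ} (hu2 : ContDiff ℝ 2 u) (x v : E3) (s : ℝ) :
    HasDerivAt (fun t => fderiv ℝ u (x + t • v) v) (fderiv ℝ (fderiv ℝ u) (x + s • v) v v) s := by
  have hc : HasDerivAt (fun t : ℝ => x + t • v) v s := by
    simpa using ((hasDerivAt_id s).smul_const v).const_add x
  have hdf : ContDiff ℝ 1 (fderiv ℝ u) := hu2.fderiv_right (by norm_num)
  have h1 : HasDerivAt (fun t => fderiv ℝ u (x + t • v))
      (fderiv ℝ (fderiv ℝ u) (x + s • v) v) s :=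
    ((hdf.differentiable (by norm_num)).differentiableAt.hasFDerivAt).comp_hasDerivAt s hc
  simpa using h1.clm_apply (hasDerivAt_const s v)

lemma rad_hasDerivAt {u : E3 → ℝ} (hu2 : ContDiff ℝ 2 u) (t : ℝ) :
    HasDerivAt (rad u) (fderiv ℝ u (t • e₀) e₀) t := by
  have := line_hasDerivAt hu2 0 e₀ t
  simp at this; exact this

lemma rad_deriv_eq {u : E3 → ℝ} (hu2 : ContDiff ℝ 2 u) :
    deriv (rad u) = fun t => fderiv ℝ u (t • e₀) e₀ :=
  funext fun t => (rad_hasDerivAt hu2 t).deriv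

lemma rad_hasDerivAt' {u : E3 → ℝ} (hu2 : ContDiff ℝ 2 u) (t : ℝ) :
    HasDerivAt (rad u) (deriv (rad u) t) t := by
  rw [rad_deriv_eq hu2]; exact rad_hasDerivAt hu2 t

lemma rad_deriv_hasDerivAt {u : E3 → ℝ} (hu2 : ContDiff ℝ 2 u) (t : ℝ) :
    HasDerivAt (deriv (rad u)) (fderiv ℝ (fderiv ℝ u) (t • e₀) e₀ e₀) t := by
  rw [rad_deriv_eq hu2]
  have := line_deriv2 hu2 0 e₀ t
  simpa using this

lemma rad_deriv_hasDerivAt' {u : E3 → ℝ} (hu2 : ContDiff ℝ 2 u) (t : ℝ) :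
    HasDerivAt (deriv (rad u)) (deriv (deriv (rad u)) t) t :=
  (rad_deriv_hasDerivAt hu2 t).differentiableAt.hasDerivAt

lemma norm_perp (r s : ℝ) (i : Fin 3) (hi : i ≠ 0) :
    ‖(r • e₀ + s • EuclideanSpace.single i (1:ℝ) : E3)‖ = Real.sqrt (r^2 + s^2) := by
  fin_cases i
  · exact absurd rfl hi
  all_goals
  · rw [EuclideanSpace.norm_eq]
    congr 1
    simp [Fin.sum_univ_three, e₀, EuclideanSpace.single_apply, sq_abs]

lemma sqrt_hasDerivAt {r : ℝ} (hr : 0 < r) (s : ℝ) :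
    HasDerivAt (fun s : ℝ => Real.sqrt (r^2 + s^2)) (s / Real.sqrt (r^2 + s^2)) s := by
  have h1 : HasDerivAt (fun s : ℝ => r^2 + s^2) (2*s) s := by
    simpa using ((hasDerivAt_pow 2 s)).const_add (r^2)
  have h2 := (Real.hasDerivAt_sqrt (show r^2+s^2 ≠ 0 by positivity)).comp s h1
  refine h2.congr_deriv ?_
  have : Real.sqrt (r^2+s^2) ≠ 0 := by positivity
  field_simp

lemma perp_second_deriv {u : E3 → ℝ} {u₀ : ℝ → ℝ} (hu2 : ContDiff ℝ 2 u)
    (hurad : ∀ x, u x = u₀ ‖x‖) {r : ℝ} (hr : 0 < r) (i : Fin 3) (hi : i ≠ 0) :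
    fderiv ℝ (fderiv ℝ u) (r • e₀) (EuclideanSpace.single i (1:ℝ))
      (EuclideanSpace.single i (1:ℝ)) = deriv (rad u) r / r := by
  set ei : E3 := EuclideanSpace.single i (1:ℝ) with hei
  set x : E3 := r • e₀ with hx
  set w : ℝ → ℝ := fun t => u (x + t • ei) with hwdef
  have hρpos : ∀ s : ℝ, 0 < Real.sqrt (r^2 + s^2) := fun s => by positivity
  have hwf : deriv w = fun s => fderiv ℝ u (x + s • ei) ei :=
    funext fun s => (line_hasDerivAt hu2 x ei s).deriv
  have hD1 : HasDerivAt (deriv w) (fderiv ℝ (fderiv ℝ u) x ei ei) 0 := by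
    rw [hwf]
    have := line_deriv2 hu2 x ei 0
    simpa using this
  have hw2 : ∀ s, deriv w s = deriv (rad u) (Real.sqrt (r^2+s^2)) * (s / Real.sqrt (r^2+s^2)) := by
    intro s
    have hcomp : HasDerivAt (fun s : ℝ => rad u (Real.sqrt (r^2+s^2)))
        (deriv (rad u) (Real.sqrt (r^2+s^2)) * (s / Real.sqrt (r^2+s^2))) s :=
      (rad_hasDerivAt' hu2 _).comp s (sqrt_hasDerivAt hr s)
    have hweq : w = fun s : ℝ => rad u (Real.sqrt (r^2+s^2)) := by
      funext t
      rw [hwdef]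
      simp only
      rw [hurad, rad_eq hurad (Real.sqrt_nonneg _), hx, norm_perp r t i hi]
    rw [hweq]
    exact hcomp.deriv
  have hD2 : HasDerivAt (deriv w) (deriv (rad u) r / r) 0 := by
    have hA : HasDerivAt (fun s : ℝ => deriv (rad u) (Real.sqrt (r^2+s^2)))
        (deriv (deriv (rad u)) (Real.sqrt (r^2+0^2)) * (0 / Real.sqrt (r^2+0^2))) 0 :=
      (rad_deriv_hasDerivAt' hu2 _).comp 0 (sqrt_hasDerivAt hr 0)
    have hB : HasDerivAt (fun s : ℝ => s / Real.sqrt (r^2+s^2))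
        ((1 * Real.sqrt (r^2+0^2) - 0 * (0 / Real.sqrt (r^2+0^2))) / (Real.sqrt (r^2+0^2))^2) 0 :=
      (hasDerivAt_id 0).div (sqrt_hasDerivAt hr 0) (ne_of_gt (hρpos 0))
    have hAB := hA.mul hB
    have heq : deriv w = fun s : ℝ =>
        deriv (rad u) (Real.sqrt (r^2+s^2)) * (s / Real.sqrt (r^2+s^2)) := funext hw2
    rw [heq]
    refine hAB.congr_deriv ?_
    have h0 : Real.sqrt (r^2+0^2) = r := by
      rw [show r^2+0^2 = r^2 by ring, Real.sqrt_sq hr.le]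
    rw [h0]
    field_simp
    ring
  exact hD1.unique hD2

lemma laplacian_radial {u : E3 → ℝ} {u₀ : ℝ → ℝ} (hu2 : ContDiff ℝ 2 u)
    (hurad : ∀ x, u x = u₀ ‖x‖) {r : ℝ} (hr : 0 < r) :
    laplacian u (r • e₀) = deriv (deriv (rad u)) r + (2/r) * deriv (rad u) r := by
  have h0 : iteratedFDeriv ℝ 2 u (r • e₀) ![EuclideanSpace.single 0 (1:ℝ), EuclideanSpace.single 0 (1:ℝ)]
      = deriv (deriv (rad u)) r := by
    rw [iteratedFDeriv_two_apply]
    simp only [Matrix.cons_val_zero, Matrix.cons_val_one, Matrix.head_cons]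
    exact ((rad_deriv_hasDerivAt hu2 r).deriv).symm ▸ rfl
  have h1 : ∀ i : Fin 3, i ≠ 0 → iteratedFDeriv ℝ 2 u (r • e₀)
      ![EuclideanSpace.single i (1:ℝ), EuclideanSpace.single i (1:ℝ)]
      = deriv (rad u) r / r := by
    intro i hi
    rw [iteratedFDeriv_two_apply]
    simp only [Matrix.cons_val_zero, Matrix.cons_val_one, Matrix.head_cons]
    exact perp_second_deriv hu2 hurad hr i hi
  rw [laplacian, Fin.sum_univ_three, h0, h1 1 (by decide), h1 2 (by decide)]
  field_simp
  ring

/-! ### Algebraic identities for the nonlinearity -/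

lemma Gpot_eq {q : ℝ} (β a b : ℝ) :
    Gpot (2*q+3) β a b
      = (1/(2*q+4)) * (|a|^(2*q+4) + |b|^(2*q+4) + 2*β*(|a|^(q+2) * |b|^(q+2))) := by
  rw [Gpot, show (2*q+3+1 : ℝ) = 2*q+4 by ring, show ((2*q+4)/2 : ℝ) = q+2 by ring,
    abs_mul, Real.mul_rpow (abs_nonneg a) (abs_nonneg b)]

lemma aux_sq {c a : ℝ} (hc : c + 2 ≠ 0) : |a| ^ c * a * a = |a| ^ (c + 2) := by
  rcases eq_or_ne a 0 with rfl | h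
  · simp [Real.zero_rpow hc]
  · rw [Real.rpow_add (abs_pos.2 h), show ((2:ℝ)) = ((2:ℕ):ℝ) by norm_num,
      Real.rpow_natCast, sq_abs]
    ring

lemma Fnl_dot {q : ℝ} (hq : -1 < q) (β a b : ℝ) :
    Fnl q β a b * a + Fnl q β b a * b = (2*q+4) * Gpot (2*q+3) β a b := by
  have h1a : |a| ^ (2*q+2) * a * a = |a| ^ (2*q+4) := by
    have := aux_sq (c := 2*q+2) (a := a) (by linarith)
    rwa [show (2*q+2+2 : ℝ) = 2*q+4 by ring] at this
  have h1b : |b| ^ (2*q+2) * b * b = |b| ^ (2*q+4) := by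
    have := aux_sq (c := 2*q+2) (a := b) (by linarith)
    rwa [show (2*q+2+2 : ℝ) = 2*q+4 by ring] at this
  have h2a : |a| ^ q * a * a = |a| ^ (q+2) := aux_sq (by linarith)
  have h2b : |b| ^ q * b * b = |b| ^ (q+2) := aux_sq (by linarith)
  have h24 : (2*q+4 : ℝ) ≠ 0 := by linarith
  have hstep : (2*q+4) * ((1/(2*q+4)) * (|a|^(2*q+4)+|b|^(2*q+4)+2*β*(|a|^(q+2)*|b|^(q+2))))
      = |a|^(2*q+4)+|b|^(2*q+4)+2*β*(|a|^(q+2)*|b|^(q+2)) := by field_simp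
  rw [Gpot_eq, hstep, Fnl, Fnl]
  linear_combination h1a + h1b + β*|b|^(q+2)*h2a + β*|a|^(q+2)*h2b

/-! ### Main theorem -/

/-- Rellich–Pohozaev identity for classical radial solutions of the system in `ℝ³`:
`∫₀^R (5-p) G(𝒰(r)) r² dr
  = R³ (2 G(𝒰(R)) + |𝒰'(R)|² + (1/R) 𝒰(R)·𝒰'(R))` for every `R > 0`. -/
theorem stmt13 (q β p : ℝ) (hq : -1 < q) (hpdef : p = 2 * q + 3)
    (u v : EuclideanSpace ℝ (Fin 3) → ℝ) (u₀ v₀ : ℝ → ℝ)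
    (hurad : ∀ x, u x = u₀ ‖x‖) (hvrad : ∀ x, v x = v₀ ‖x‖)
    (hu2 : ContDiff ℝ 2 u) (hv2 : ContDiff ℝ 2 v)
    (hequ : ∀ x, -laplacian u x = Fnl q β (u x) (v x))
    (heqv : ∀ x, -laplacian v x = Fnl q β (v x) (u x)) :
    ∀ R : ℝ, 0 < R →
      (∫ r in (0:ℝ)..R, (5 - p) * Gpot p β (u₀ r) (v₀ r) * r ^ 2)
        = R ^ 3 * (2 * Gpot p β (u₀ R) (v₀ R)
            + ((deriv u₀ R) ^ 2 + (deriv v₀ R) ^ 2)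
            + (1 / R) * (u₀ R * deriv u₀ R + v₀ R * deriv v₀ R)) := by
  subst hpdef
  intro R hR
  have hvq : (1:ℝ) < 2*q+4 := by linarith
  have hq2 : (1:ℝ) < q+2 := by linarith
  have h24 : (2*q+4:ℝ) ≠ 0 := by linarith
  -- the ODEs for the radial profiles
  have hodeu : ∀ r : ℝ, 0 < r → deriv (deriv (rad u)) r
      = -((2/r) * deriv (rad u) r) - Fnl q β (rad u r) (rad v r) := by
    intro r hr
    have h1 := hequ (r • e₀)
    rw [laplacian_radial hu2 hurad hr] at h1
    have h2 : u (r • e₀) = rad u r := rfl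
    have h3 : v (r • e₀) = rad v r := rfl
    rw [h2, h3] at h1
    linarith
  have hodev : ∀ r : ℝ, 0 < r → deriv (deriv (rad v)) r
      = -((2/r) * deriv (rad v) r) - Fnl q β (rad v r) (rad u r) := by
    intro r hr
    have h1 := heqv (r • e₀)
    rw [laplacian_radial hv2 hvrad hr] at h1
    have h2 : u (r • e₀) = rad u r := rfl
    have h3 : v (r • e₀) = rad v r := rfl
    rw [h2, h3] at h1
    linarith
  -- the potential along the solution and its derivative
  set g : ℝ → ℝ := fun r => Gpot (2*q+3) β (rad u r) (rad v r) with hg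
  have hgform : g = fun r => (1/(2*q+4)) * (|rad u r|^(2*q+4) + |rad v r|^(2*q+4)
      + 2*β*(|rad u r|^(q+2) * |rad v r|^(q+2))) := funext fun r => Gpot_eq β _ _
  have hgd : ∀ r : ℝ, HasDerivAt g
      (Fnl q β (rad u r) (rad v r) * deriv (rad u) r
        + Fnl q β (rad v r) (rad u r) * deriv (rad v) r) r := by
    intro r
    have d1u : HasDerivAt (fun r => |rad u r| ^ (2*q+4))
        (((2*q+4) * |rad u r|^(2*q+4-2) * rad u r) * deriv (rad u) r) r := by
      have := (abs_rpow_deriv hvq (rad u r)).comp r (rad_hasDerivAt' hu2 r)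
      simpa [Function.comp_def] using this
    have d1v : HasDerivAt (fun r => |rad v r| ^ (2*q+4))
        (((2*q+4) * |rad v r|^(2*q+4-2) * rad v r) * deriv (rad v) r) r := by
      have := (abs_rpow_deriv hvq (rad v r)).comp r (rad_hasDerivAt' hv2 r)
      simpa [Function.comp_def] using this
    have d2u : HasDerivAt (fun r => |rad u r| ^ (q+2))
        (((q+2) * |rad u r|^(q+2-2) * rad u r) * deriv (rad u) r) r := by
      have := (abs_rpow_deriv hq2 (rad u r)).comp r (rad_hasDerivAt' hu2 r)
      simpa [Function.comp_def] using this
    have d2v : HasDerivAt (fun r => |rad v r| ^ (q+2))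
        (((q+2) * |rad v r|^(q+2-2) * rad v r) * deriv (rad v) r) r := by
      have := (abs_rpow_deriv hq2 (rad v r)).comp r (rad_hasDerivAt' hv2 r)
      simpa [Function.comp_def] using this
    have dall := (((d1u.add d1v).add ((d2u.mul d2v).const_mul (2*β))).const_mul (1/(2*q+4)))
    rw [hgform]
    refine dall.congr_deriv ?_
    rw [Fnl, Fnl, show (2*q+4-2:ℝ) = 2*q+2 by ring, show (q+2-2:ℝ) = q by ring]
    field_simp
    ring
  -- the Pohozaev function
  set H : ℝ → ℝ := fun r => r^3 * (2 * g r + (deriv (rad u) r)^2 + (deriv (rad v) r)^2)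
      + r^2 * (rad u r * deriv (rad u) r + rad v r * deriv (rad v) r) with hH
  have hHd : ∀ r ∈ Ioo (0:ℝ) R, HasDerivAt H ((5 - (2*q+3)) * g r * r^2) r := by
    intro r hrmem
    obtain ⟨hr, -⟩ := hrmem
    have hr0 : r ≠ 0 := ne_of_gt hr
    have e1 : HasDerivAt (fun r : ℝ => r^3) (3*r^2) r := by
      simpa using hasDerivAt_pow 3 r
    have e2 : HasDerivAt (fun r : ℝ => r^2) (2*r) r := by
      simpa using hasDerivAt_pow 2 r
    have t1 := (((hgd r).const_mul 2).add ((rad_deriv_hasDerivAt' hu2 r).pow 2)).add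
      ((rad_deriv_hasDerivAt' hv2 r).pow 2)
    have t2 := ((rad_hasDerivAt' hu2 r).mul (rad_deriv_hasDerivAt' hu2 r)).add
      ((rad_hasDerivAt' hv2 r).mul (rad_deriv_hasDerivAt' hv2 r))
    have big := (e1.mul t1).add (e2.mul t2)
    have hdot : Fnl q β (rad u r) (rad v r) * rad u r
        + Fnl q β (rad v r) (rad u r) * rad v r = (2*q+4) * g r := Fnl_dot hq β _ _
    refine big.congr_deriv ?_
    rw [hodeu r hr, hodev r hr]
    simp only [Pi.add_apply, Pi.mul_apply, Pi.pow_apply]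
    field_simp
    linear_combination (-r) * hdot
  -- continuity facts
  have hcu : Continuous (rad u) := (rad_contDiff hu2).continuous
  have hcv : Continuous (rad v) := (rad_contDiff hv2).continuous
  have hcu' : Continuous (deriv (rad u)) :=
    (contDiff_one_iff_deriv.mp ((rad_contDiff hu2).of_le (by norm_num))).2
  have hcv' : Continuous (deriv (rad v)) :=
    (contDiff_one_iff_deriv.mp ((rad_contDiff hv2).of_le (by norm_num))).2
  have hgc : Continuous g := by
    rw [hgform]
    exact continuous_const.mul
      ((((cont_abs_rpow (by linarith)).comp hcu).add
        ((cont_abs_rpow (by linarith)).comp hcv)).add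
        (continuous_const.mul (((cont_abs_rpow (by linarith)).comp hcu).mul
          ((cont_abs_rpow (by linarith)).comp hcv))))
  have hHc : Continuous H := by
    rw [hH]
    exact ((continuous_pow 3).mul (((continuous_const.mul hgc).add (hcu'.pow 2)).add
      (hcv'.pow 2))).add ((continuous_pow 2).mul ((hcu.mul hcu').add (hcv.mul hcv')))
  have hintc : Continuous fun r : ℝ => (5 - (2*q+3)) * g r * r^2 :=
    (continuous_const.mul hgc).mul (continuous_pow 2)
  -- the fundamental theorem of calculus
  have hFTC := intervalIntegral.integral_eq_sub_of_hasDeriv_right_of_le hR.le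
    hHc.continuousOn (fun x hx => (hHd x hx).hasDerivWithinAt)
    (hintc.intervalIntegrable 0 R)
  have hH0 : H 0 = 0 := by
    rw [hH]; norm_num
  -- replace the profiles in the integrand
  have hcongr : EqOn (fun r : ℝ => (5 - (2*q+3)) * Gpot (2*q+3) β (u₀ r) (v₀ r) * r^2)
      (fun r : ℝ => (5 - (2*q+3)) * g r * r^2) (uIcc (0:ℝ) R) := by
    intro r hrm
    rw [uIcc_of_le hR.le] at hrm
    simp only [hg]
    rw [rad_eq hurad hrm.1, rad_eq hvrad hrm.1]
  rw [intervalIntegral.integral_congr hcongr, hFTC, hH0, sub_zero]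
  -- final algebra
  have hdu : deriv u₀ R = deriv (rad u) R := by
    apply Filter.EventuallyEq.deriv_eq
    filter_upwards [Ioi_mem_nhds hR] with t ht
    exact (rad_eq hurad ht.le).symm
  have hdv : deriv v₀ R = deriv (rad v) R := by
    apply Filter.EventuallyEq.deriv_eq
    filter_upwards [Ioi_mem_nhds hR] with t ht
    exact (rad_eq hvrad ht.le).symm
  have huR : u₀ R = rad u R := (rad_eq hurad hR.le).symm
  have hvR : v₀ R = rad v R := (rad_eq hvrad hR.le).symm
  rw [hH, hdu, hdv, huR, hvR]
  simp only [hg]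
  rw [rad_eq hurad hR.le, rad_eq hvrad hR.le, huR, hvR]
  field_simp
  ring
end
end

section
/- Let n = 3, p ∈ (3,5), a := 2(p−3)/(p−1) and b := 2(p−3)/(p−1)², and let (u,v) be a classical radial solution of the system −Δu = |u|^{2q+2}u + β|v|^{q+2}|u|^q u, −Δv = |v|^{2q+2}v + β|u|^{q+2}|v|^q v in ℝ³, where p = 2q+3. Set U(r) := r^{2/(p−1)} u(r), V(r) := r^{2/(p−1)} v(r), φ(r) := U'(r)² + V'(r)², and E(r) := −(b/2)(U(r)² + V(r)²) + (1/(p+1))(|U(r)|^{p+1} + |V(r)|^{p+1}) + (2β/(p+1))|U(r)V(r)|^{(p+1)/2}. Then for all 0 < r < ρ the energy identity holds: ½(ρ²φ(ρ) − r²φ(r)) − (1−a)∫_r^ρ s φ(s) ds + E(ρ) − E(r) = 0. -/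
open Set

noncomputable section

variable {E : Type*} [NormedAddCommGroup E] [InnerProductSpace ℝ E]

lemma myHasFDerivAt_norm (x : E) (hx : x ≠ 0) :
    HasFDerivAt (fun y : E => ‖y‖) (‖x‖⁻¹ • innerSL ℝ x) x := by
  have h1 : HasFDerivAt (fun y : E => ‖y‖ ^ 2) (2 • innerSL ℝ x) x :=
    (hasStrictFDerivAt_norm_sq x).hasFDerivAt
  have hxn : (0:ℝ) < ‖x‖ := norm_pos_iff.mpr hx
  have hx2 : (‖x‖ : ℝ) ^ 2 ≠ 0 := by positivity
  have h2 := h1.sqrt hx2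
  have heq : (fun y : E => Real.sqrt (‖y‖ ^ 2)) = fun y : E => ‖y‖ := by
    funext y; exact Real.sqrt_sq (norm_nonneg y)
  rw [heq] at h2
  convert h2 using 1
  rw [Real.sqrt_sq (norm_nonneg x)]
  ext y
  rw [two_smul]
  simp only [ContinuousLinearMap.smul_apply, ContinuousLinearMap.add_apply, smul_eq_mul]
  field_simp
  ring

lemma radial_lap (u : EuclideanSpace ℝ (Fin 3) → ℝ) (hu2 : ContDiff ℝ 2 u)
    (f : ℝ → ℝ) (hfdef : ∀ t : ℝ, f t = u (t • EuclideanSpace.single (0 : Fin 3) (1:ℝ)))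
    (hrad : ∀ x, u x = f ‖x‖) (r : ℝ) (hr : 0 < r) :
    laplacian u (r • EuclideanSpace.single (0 : Fin 3) (1:ℝ))
      = deriv (deriv f) r + 2 / r * deriv f r := by
  set e0 : EuclideanSpace ℝ (Fin 3) := EuclideanSpace.single (0 : Fin 3) (1:ℝ) with he0
  set x₀ : EuclideanSpace ℝ (Fin 3) := r • e0 with hx₀def
  have hfC : ContDiff ℝ 2 f := by
    have : f = u ∘ (fun t : ℝ => t • e0) := funext hfdef
    rw [this]
    exact hu2.comp (contDiff_id.smul contDiff_const)
  have hfd : Differentiable ℝ f := hfC.differentiable (by norm_num)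
  have hf'C : ContDiff ℝ 1 (deriv f) := by
    have h2 : ContDiff ℝ ((1 : ℕ) + 1) f := by exact_mod_cast hfC
    exact (contDiff_succ_iff_deriv.mp h2).2.2
  have hf'd : Differentiable ℝ (deriv f) := hf'C.differentiable one_ne_zero
  set c : EuclideanSpace ℝ (Fin 3) → ℝ := fun x => deriv f ‖x‖ * ‖x‖⁻¹ with hc_def
  have hu' : ∀ x : EuclideanSpace ℝ (Fin 3), x ≠ 0 → HasFDerivAt u (c x • innerSL ℝ x) x := by
    intro x hx
    have h1 := (hfd ‖x‖).hasDerivAt.comp_hasFDerivAt x (myHasFDerivAt_norm x hx)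
    have h2 : (fun y : EuclideanSpace ℝ (Fin 3) => f ‖y‖) = u := funext fun y => (hrad y).symm
    rw [Function.comp_def, h2, smul_smul] at h1
    exact h1
  have hfderiv_eq : ∀ x : EuclideanSpace ℝ (Fin 3), x ≠ 0 → fderiv ℝ u x = c x • innerSL ℝ x :=
    fun x hx => (hu' x hx).fderiv
  have hne0 : e0 ≠ 0 := by
    intro h
    have := congrArg (fun y : EuclideanSpace ℝ (Fin 3) => y 0) h
    simp [he0, EuclideanSpace.single_apply] at this
  have hnx₀ : ‖x₀‖ = r := by
    rw [hx₀def, norm_smul, EuclideanSpace.norm_single]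
    simp [abs_of_pos hr]
  have hx₀ne : x₀ ≠ 0 := by
    intro h; rw [h] at hnx₀; simp at hnx₀; exact hr.ne' hnx₀.symm
  -- derivative of c at x₀
  set c' : ℝ := deriv (deriv f) r * r⁻¹ + deriv f r * (-(r^2)⁻¹) with hc'
  have hh : HasDerivAt (fun t : ℝ => deriv f t * t⁻¹) c' r :=
    (hf'd r).hasDerivAt.mul (hasDerivAt_inv hr.ne')
  set Dc : EuclideanSpace ℝ (Fin 3) →L[ℝ] ℝ := c' • (r⁻¹ • innerSL ℝ x₀) with hDc
  have hc : HasFDerivAt c Dc x₀ := by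
    have hn := myHasFDerivAt_norm x₀ hx₀ne
    rw [hnx₀] at hn
    exact hh.comp_hasFDerivAt_of_eq x₀ hn hnx₀.symm
  have hdiff_fderiv : DifferentiableAt ℝ (fderiv ℝ u) x₀ :=
    ((hu2.fderiv_right (m := 1) (by norm_num)).differentiable one_ne_zero) x₀
  -- second derivative applied to (w, w)
  have key : ∀ w : EuclideanSpace ℝ (Fin 3),
      iteratedFDeriv ℝ 2 u x₀ ![w, w]
        = c x₀ * (inner ℝ w w : ℝ) + (inner ℝ w x₀ : ℝ) * (Dc w) := by
    intro w
    rw [iteratedFDeriv_two_apply]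
    have hflip : fderiv ℝ (fderiv ℝ u) x₀ (![w,w] 0) (![w,w] 1)
        = fderiv ℝ (fun x => fderiv ℝ u x w) x₀ w := by
      rw [fderiv_clm_apply hdiff_fderiv (differentiableAt_const w)]
      simp
    rw [hflip]
    have hev : (fun x => fderiv ℝ u x w) =ᶠ[nhds x₀] (fun x => c x * (innerSL ℝ w) x) := by
      have hopen : IsOpen {x : EuclideanSpace ℝ (Fin 3) | x ≠ 0} := isOpen_ne
      filter_upwards [hopen.mem_nhds hx₀ne] with x hx
      rw [hfderiv_eq x hx]
      simp only [ContinuousLinearMap.smul_apply, innerSL_apply_apply, smul_eq_mul]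
      rw [real_inner_comm]
    have hmul : HasFDerivAt (fun x => c x * (innerSL ℝ w) x)
        (c x₀ • innerSL ℝ w + ((innerSL ℝ w) x₀) • Dc) x₀ :=
      hc.mul ((innerSL ℝ w).hasFDerivAt)
    have := (hmul.congr_of_eventuallyEq hev).fderiv
    rw [this]
    simp only [ContinuousLinearMap.add_apply, ContinuousLinearMap.smul_apply, innerSL_apply_apply,
      smul_eq_mul]
  have hDcw : ∀ w : EuclideanSpace ℝ (Fin 3), Dc w = c' * (r⁻¹ * (inner ℝ x₀ w : ℝ)) := by
    intro w; simp [hDc]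
  have hlap : laplacian u x₀ = ∑ i : Fin 3,
      (c x₀ * (inner ℝ (EuclideanSpace.single i (1:ℝ)) (EuclideanSpace.single i (1:ℝ)) : ℝ)
        + (inner ℝ (EuclideanSpace.single i (1:ℝ)) x₀ : ℝ)
          * (c' * (r⁻¹ * (inner ℝ x₀ (EuclideanSpace.single i (1:ℝ)) : ℝ)))) := by
    unfold laplacian
    refine Finset.sum_congr rfl fun i _ => ?_
    rw [key, hDcw]
  have hinner1 : ∀ i : Fin 3,
      (inner ℝ (EuclideanSpace.single i (1:ℝ)) (EuclideanSpace.single i (1:ℝ)) : ℝ) = 1 := by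
    intro i
    rw [EuclideanSpace.inner_single_left]
    simp [EuclideanSpace.single_apply]
  have hinner2 : ∀ i : Fin 3,
      (inner ℝ (EuclideanSpace.single i (1:ℝ)) x₀ : ℝ) = if (0 : Fin 3) = i then r else 0 := by
    intro i
    rw [EuclideanSpace.inner_single_left]
    simp [hx₀def, he0, EuclideanSpace.single_apply, eq_comm]
  have hinner3 : ∀ i : Fin 3,
      (inner ℝ x₀ (EuclideanSpace.single i (1:ℝ)) : ℝ) = if (0 : Fin 3) = i then r else 0 := by
    intro i
    rw [real_inner_comm]
    exact hinner2 i
  rw [hlap, Fin.sum_univ_three]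
  rw [hinner1 0, hinner1 1, hinner1 2, hinner2 0, hinner2 1, hinner2 2,
    hinner3 0, hinner3 1, hinner3 2]
  rw [if_pos rfl, if_neg (by decide : ¬((0:Fin 3) = 1)), if_neg (by decide : ¬((0:Fin 3) = 2))]
  have h0 : c x₀ = deriv f r * r⁻¹ := by rw [hc_def]; simp [hnx₀]
  rw [h0, hc']
  field_simp
  ring


lemma abs_rpow_split {q : ℝ} (hq : 0 < q) (x : ℝ) : |x| ^ (q + 2) = |x| ^ q * x ^ 2 := by
  rcases eq_or_ne x 0 with rfl | hx
  · rw [abs_zero, Real.zero_rpow (by linarith), Real.zero_rpow hq.ne']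
    ring
  · have h : (0:ℝ) < |x| := abs_pos.mpr hx
    rw [show q + 2 = q + ((2:ℕ):ℝ) by push_cast; ring, Real.rpow_add h, Real.rpow_natCast, sq_abs]

lemma abs_rpow_split2 {q : ℝ} (hq : 0 < q) (x : ℝ) :
    |x| ^ (2 * q + 2) = (|x| ^ q) ^ 2 * x ^ 2 := by
  rcases eq_or_ne x 0 with rfl | hx
  · rw [abs_zero, Real.zero_rpow (by linarith), Real.zero_rpow hq.ne']
    ring
  · have h : (0:ℝ) < |x| := abs_pos.mpr hx
    rw [show 2 * q + 2 = q + (q + ((2:ℕ):ℝ)) by push_cast; ring, Real.rpow_add h,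
      Real.rpow_add h, Real.rpow_natCast, sq_abs]
    ring

lemma energy_alg (a b s β w x w' x' w'' x'' P Q : ℝ)
    (hw2 : s^2*w'' = b*w - a*s*w' - (P^2*w^2)*w - β*(Q*x^2)*P*w)
    (hx2 : s^2*x'' = b*x - a*s*x' - (Q^2*x^2)*x - β*(P*w^2)*Q*x) :
    s*(w'^2+x'^2) + s^2*(w'*w'' + x'*x'')
      + (-b*(w*w'+x*x') + (P^2*w^2*w*w' + Q^2*x^2*x*x')
         + β*(P*Q)*(w*x)*(w'*x + w*x'))
      = (1-a)*s*(w'^2+x'^2) := by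
  linear_combination w' * hw2 + x' * hx2

lemma side_ode (p q β α a b : ℝ) (hp3 : 3 < p) (hpdef : p = 2*q+3)
    (hα : α = 2/(p-1)) (ha : a = 2*(p-3)/(p-1)) (hb : b = 2*(p-3)/(p-1)^2)
    (f g : ℝ → ℝ)
    (hode : ∀ s > (0:ℝ), deriv (deriv f) s + 2/s * deriv f s
      + (|f s|^(2*q+2)*(f s) + β*|g s|^(q+2)*|f s|^q*(f s)) = 0)
    (s : ℝ) (hs : 0 < s) :
    s^2 * (α*(α-1)*s^(α-2)*f s + 2*α*s^(α-1)*deriv f s + s^α*deriv (deriv f) s)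
      = b*(s^α*f s) - a*s*(α*s^(α-1)*f s + s^α*deriv f s)
        - |s^α*f s|^(2*q+2)*(s^α*f s) - β*|s^α*g s|^(q+2)*|s^α*f s|^q*(s^α*f s) := by
  have hp1 : p - 1 ≠ 0 := by intro h; nlinarith
  have hq0 : 0 < q := by nlinarith
  have hA : (0:ℝ) < s^α := Real.rpow_pos_of_pos hs α
  have hB1 : s^(α-1) * s = s^α := by
    rw [← Real.rpow_add_one hs.ne' (α-1)]; ring_nf
  have hB2 : s^(α-2) * s^2 = s^α := by
    rw [show (s:ℝ)^2 = s^((2:ℕ):ℝ) by rw [Real.rpow_natCast], ← Real.rpow_add hs]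
    norm_num
  have habsf : |s^α * f s| = s^α * |f s| := by rw [abs_mul, abs_of_pos hA]
  have habsg : |s^α * g s| = s^α * |g s| := by rw [abs_mul, abs_of_pos hA]
  have hqe : α * (2*q+2) = 2 := by
    rw [hα, div_mul_eq_mul_div, div_eq_iff hp1, hpdef]
    ring
  have hpow1 : (s^α) ^ (2*q+2) = s^2 := by
    rw [← Real.rpow_mul hs.le, hqe, show ((2:ℝ):ℝ) = ((2:ℕ):ℝ) by norm_num, Real.rpow_natCast]
  have h23 : (s^α)^(q+2) * (s^α)^q = s^2 := by
    rw [← Real.rpow_mul hs.le, ← Real.rpow_mul hs.le, ← Real.rpow_add hs,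
      show α*(q+2) + α*q = α*(2*q+2) by ring, hqe,
      show ((2:ℝ):ℝ) = ((2:ℕ):ℝ) by norm_num, Real.rpow_natCast]
  have h := hode s hs
  have e : s^2 * (2/s * deriv f s) = 2*s*deriv f s := by
    field_simp
  have hN2 : s^2*deriv (deriv f) s + 2*s*deriv f s
      + s^2*(|f s|^(2*q+2)*(f s) + β*|g s|^(q+2)*|f s|^q*(f s)) = 0 := by
    linear_combination s^2 * h - e
  rw [habsf, habsg, Real.mul_rpow hA.le (abs_nonneg _), Real.mul_rpow hA.le (abs_nonneg _),
    Real.mul_rpow hA.le (abs_nonneg _), hpow1]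
  have hc1 : 2*α + a = 2 := by
    rw [hα, ha]
    field_simp
    ring
  have hc2 : α*(α-1) + a*α - b = 0 := by
    rw [hα, ha, hb]
    field_simp
    ring
  linear_combination (s^α) * hN2 + (s*(s^α)*deriv f s) * hc1
    + ((s^α)*f s) * hc2
    + (2*α*s*deriv f s + a*α*f s) * hB1 + (α*(α-1)*f s) * hB2
    + (β*|g s|^(q+2)*|f s|^q*(s^α)*f s) * h23


section derivs

/-- first derivative of the rescaled profile -/
lemma hasDerivAt_W {f : ℝ → ℝ} (hfd : Differentiable ℝ f) (α : ℝ) {s : ℝ} (hs : 0 < s) :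
    HasDerivAt (fun t : ℝ => t ^ α * f t) (α * s ^ (α - 1) * f s + s ^ α * deriv f s) s := by
  have h1 : HasDerivAt (fun t : ℝ => t ^ α) (α * s ^ (α - 1)) s :=
    Real.hasDerivAt_rpow_const (Or.inl hs.ne')
  exact h1.mul (hfd s).hasDerivAt

/-- second derivative of the rescaled profile -/
lemma hasDerivAt_W' {f : ℝ → ℝ} (hfd : Differentiable ℝ f)
    (hf'd : Differentiable ℝ (deriv f)) (α : ℝ) {s : ℝ} (hs : 0 < s) :
    HasDerivAt (fun t : ℝ => α * t ^ (α - 1) * f t + t ^ α * deriv f t)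
      (α * (α - 1) * s ^ (α - 2) * f s + 2 * α * s ^ (α - 1) * deriv f s
        + s ^ α * deriv (deriv f) s) s := by
  have h1 : HasDerivAt (fun t : ℝ => t ^ (α - 1)) ((α - 1) * s ^ (α - 1 - 1)) s :=
    Real.hasDerivAt_rpow_const (Or.inl hs.ne')
  have h2 : HasDerivAt (fun t : ℝ => t ^ α) (α * s ^ (α - 1)) s :=
    Real.hasDerivAt_rpow_const (Or.inl hs.ne')
  have hb := ((h1.const_mul α).mul (hfd s).hasDerivAt).add (h2.mul (hf'd s).hasDerivAt)
  refine hb.congr_deriv ?_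
  rw [show α - 1 - 1 = α - 2 by ring]
  ring

end derivs

/-- Energy identity for the rescaled profiles `U(r) = r^{2/(p-1)} u(r)`,
`V(r) = r^{2/(p-1)} v(r)` of a classical radial solution in `ℝ³`, `p = 2q+3 ∈ (3,5)`:
with `a = 2(p-3)/(p-1)`, `b = 2(p-3)/(p-1)²`, `φ = (U')² + (V')²` and
`E = -(b/2)(U²+V²) + (1/(p+1))(|U|^{p+1}+|V|^{p+1}) + (2β/(p+1))|UV|^{(p+1)/2}`,
one has `½(ρ²φ(ρ) - r²φ(r)) - (1-a)∫_r^ρ s φ(s) ds + E(ρ) - E(r) = 0` for `0 < r < ρ`. -/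
theorem stmt15 (q β p a b : ℝ) (hpdef : p = 2 * q + 3) (hp3 : 3 < p) (hp5 : p < 5)
    (ha : a = 2 * (p - 3) / (p - 1)) (hb : b = 2 * (p - 3) / (p - 1) ^ 2)
    (u v : EuclideanSpace ℝ (Fin 3) → ℝ) (u₀ v₀ : ℝ → ℝ)
    (hurad : ∀ x, u x = u₀ ‖x‖) (hvrad : ∀ x, v x = v₀ ‖x‖)
    (hu2 : ContDiff ℝ 2 u) (hv2 : ContDiff ℝ 2 v)
    (hequ : ∀ x, -laplacian u x = Fnl q β (u x) (v x))
    (heqv : ∀ x, -laplacian v x = Fnl q β (v x) (u x))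
    (U V φ En : ℝ → ℝ)
    (hU : ∀ r > (0 : ℝ), U r = r ^ (2 / (p - 1)) * u₀ r)
    (hV : ∀ r > (0 : ℝ), V r = r ^ (2 / (p - 1)) * v₀ r)
    (hφ : ∀ r > (0 : ℝ), φ r = (deriv U r) ^ 2 + (deriv V r) ^ 2)
    (hEn : ∀ r > (0 : ℝ), En r = -(b / 2) * ((U r) ^ 2 + (V r) ^ 2)
        + (1 / (p + 1)) * (|U r| ^ (p + 1) + |V r| ^ (p + 1))
        + (2 * β / (p + 1)) * |U r * V r| ^ ((p + 1) / 2)) :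
    ∀ r ρ : ℝ, 0 < r → r < ρ →
      (1 / 2) * (ρ ^ 2 * φ ρ - r ^ 2 * φ r) - (1 - a) * (∫ s in r..ρ, s * φ s)
        + En ρ - En r = 0 := by
  intro r ρ hr hrρ
  set α : ℝ := 2 / (p - 1) with hα
  set e0 : EuclideanSpace ℝ (Fin 3) := EuclideanSpace.single (0 : Fin 3) (1:ℝ) with he0
  set f : ℝ → ℝ := fun t => u (t • e0) with hf
  set g : ℝ → ℝ := fun t => v (t • e0) with hg
  have hnorm_smul : ∀ t : ℝ, 0 ≤ t → ‖t • e0‖ = t := by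
    intro t ht
    rw [norm_smul, he0, EuclideanSpace.norm_single]
    simp [abs_of_nonneg ht]
  have hradf : ∀ x, u x = f ‖x‖ := by
    intro x
    rw [hurad x]
    show u₀ ‖x‖ = u (‖x‖ • e0)
    rw [hurad (‖x‖ • e0), hnorm_smul _ (norm_nonneg x)]
  have hradg : ∀ x, v x = g ‖x‖ := by
    intro x
    rw [hvrad x]
    show v₀ ‖x‖ = v (‖x‖ • e0)
    rw [hvrad (‖x‖ • e0), hnorm_smul _ (norm_nonneg x)]
  have hfC : ContDiff ℝ 2 f := hu2.comp (contDiff_id.smul contDiff_const)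
  have hgC : ContDiff ℝ 2 g := hv2.comp (contDiff_id.smul contDiff_const)
  have hfd : Differentiable ℝ f := hfC.differentiable (by norm_num)
  have hgd : Differentiable ℝ g := hgC.differentiable (by norm_num)
  have hf'C : ContDiff ℝ 1 (deriv f) := by
    have h2 : ContDiff ℝ ((1 : ℕ) + 1) f := by exact_mod_cast hfC
    exact (contDiff_succ_iff_deriv.mp h2).2.2
  have hg'C : ContDiff ℝ 1 (deriv g) := by
    have h2 : ContDiff ℝ ((1 : ℕ) + 1) g := by exact_mod_cast hgC
    exact (contDiff_succ_iff_deriv.mp h2).2.2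
  have hf'd : Differentiable ℝ (deriv f) := hf'C.differentiable one_ne_zero
  have hg'd : Differentiable ℝ (deriv g) := hg'C.differentiable one_ne_zero
  -- the radial ODEs
  have hodef : ∀ s > (0:ℝ), deriv (deriv f) s + 2/s * deriv f s
      + (|f s|^(2*q+2)*(f s) + β*|g s|^(q+2)*|f s|^q*(f s)) = 0 := by
    intro s hs
    have hl := radial_lap u hu2 f (fun t => rfl) hradf s hs
    have he := hequ (s • e0)
    rw [hl] at he
    have huv : u (s • e0) = f s := rfl
    have hvv : v (s • e0) = g s := rfl
    rw [huv, hvv] at he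
    unfold Fnl at he
    linarith
  have hodeg : ∀ s > (0:ℝ), deriv (deriv g) s + 2/s * deriv g s
      + (|g s|^(2*q+2)*(g s) + β*|f s|^(q+2)*|g s|^q*(g s)) = 0 := by
    intro s hs
    have hl := radial_lap v hv2 g (fun t => rfl) hradg s hs
    have he := heqv (s • e0)
    rw [hl] at he
    have huv : u (s • e0) = f s := rfl
    have hvv : v (s • e0) = g s := rfl
    rw [huv, hvv] at he
    unfold Fnl at he
    linarith
  -- rescaled profiles
  set Wf : ℝ → ℝ := fun t => t ^ α * f t with hWf
  set Wg : ℝ → ℝ := fun t => t ^ α * g t with hWg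
  set Wf' : ℝ → ℝ := fun t => α * t ^ (α - 1) * f t + t ^ α * deriv f t with hWf'
  set Wg' : ℝ → ℝ := fun t => α * t ^ (α - 1) * g t + t ^ α * deriv g t with hWg'
  have hu₀f : ∀ s > (0:ℝ), u₀ s = f s := by
    intro s hs
    show u₀ s = u (s • e0)
    rw [hurad (s • e0), hnorm_smul s hs.le]
  have hv₀g : ∀ s > (0:ℝ), v₀ s = g s := by
    intro s hs
    show v₀ s = v (s • e0)
    rw [hvrad (s • e0), hnorm_smul s hs.le]
  have hUW : ∀ s > (0:ℝ), U s = Wf s := by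
    intro s hs; rw [hU s hs, hu₀f s hs]
  have hVW : ∀ s > (0:ℝ), V s = Wg s := by
    intro s hs; rw [hV s hs, hv₀g s hs]
  have hderU : ∀ s > (0:ℝ), deriv U s = Wf' s := by
    intro s hs
    have hev : U =ᶠ[nhds s] Wf := by
      filter_upwards [Ioi_mem_nhds hs] with t ht using hUW t ht
    rw [hev.deriv_eq]
    exact (hasDerivAt_W hfd α hs).deriv
  have hderV : ∀ s > (0:ℝ), deriv V s = Wg' s := by
    intro s hs
    have hev : V =ᶠ[nhds s] Wg := by
      filter_upwards [Ioi_mem_nhds hs] with t ht using hVW t ht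
    rw [hev.deriv_eq]
    exact (hasDerivAt_W hgd α hs).deriv
  have hφW : ∀ s > (0:ℝ), φ s = (Wf' s)^2 + (Wg' s)^2 := by
    intro s hs
    rw [hφ s hs, hderU s hs, hderV s hs]
  -- the energy functional, concretely
  set Gc : ℝ → ℝ := fun s => (1/2) * s^2 * ((Wf' s)^2 + (Wg' s)^2)
      + (-(b/2) * ((Wf s)^2 + (Wg s)^2)
        + (1/(p+1)) * (|Wf s|^(p+1) + |Wg s|^(p+1))
        + (2*β/(p+1)) * |Wf s * Wg s|^((p+1)/2)) with hGc
  have hGval : ∀ s > (0:ℝ), Gc s = (1/2) * s^2 * φ s + En s := by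
    intro s hs
    rw [hEn s hs, hφW s hs, hUW s hs, hVW s hs]
  -- derivative of the energy
  have hq0 : 0 < q := by nlinarith
  have hp1ne : p + 1 ≠ 0 := by linarith
  have hGder : ∀ s > (0:ℝ), HasDerivAt Gc ((1-a) * (s * φ s)) s := by
    intro s hs
    have hWfd : HasDerivAt Wf (Wf' s) s := hasDerivAt_W hfd α hs
    have hWgd : HasDerivAt Wg (Wg' s) s := hasDerivAt_W hgd α hs
    set wf'' : ℝ := α*(α-1)*s^(α-2)*f s + 2*α*s^(α-1)*deriv f s + s^α*deriv (deriv f) s with hwf''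
    set wg'' : ℝ := α*(α-1)*s^(α-2)*g s + 2*α*s^(α-1)*deriv g s + s^α*deriv (deriv g) s with hwg''
    have hWf'd : HasDerivAt Wf' wf'' s := hasDerivAt_W' hfd hf'd α hs
    have hWg'd : HasDerivAt Wg' wg'' s := hasDerivAt_W' hgd hg'd α hs
    -- the ODEs for the profiles
    have hodeWf : s^2*wf'' = b*(Wf s) - a*s*(Wf' s)
        - ((|Wf s|^q)^2*(Wf s)^2)*(Wf s) - β*((|Wg s|^q)*(Wg s)^2)*(|Wf s|^q)*(Wf s) := by
      have h0 := side_ode p q β α a b hp3 hpdef hα ha hb f g hodef s hs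
      have h1 : s^2*wf'' = b*(Wf s) - a*s*(Wf' s)
          - |Wf s|^(2*q+2)*(Wf s) - β*|Wg s|^(q+2)*|Wf s|^q*(Wf s) := h0
      rw [abs_rpow_split2 hq0, abs_rpow_split hq0] at h1
      rw [h1]
    have hodeWg : s^2*wg'' = b*(Wg s) - a*s*(Wg' s)
        - ((|Wg s|^q)^2*(Wg s)^2)*(Wg s) - β*((|Wf s|^q)*(Wf s)^2)*(|Wg s|^q)*(Wg s) := by
      have h0 := side_ode p q β α a b hp3 hpdef hα ha hb g f hodeg s hs
      have h1 : s^2*wg'' = b*(Wg s) - a*s*(Wg' s)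
          - |Wg s|^(2*q+2)*(Wg s) - β*|Wf s|^(q+2)*|Wg s|^q*(Wg s) := h0
      rw [abs_rpow_split2 hq0, abs_rpow_split hq0] at h1
      rw [h1]
    -- the pieces of the derivative
    have t1 : HasDerivAt (fun t : ℝ => (1/2) * t^2 * ((Wf' t)^2 + (Wg' t)^2))
        (s*((Wf' s)^2+(Wg' s)^2) + s^2*((Wf' s)*wf'' + (Wg' s)*wg'')) s := by
      have raw := ((hasDerivAt_pow 2 s).const_mul (1/2 : ℝ)).mul
        ((hWf'd.pow 2).add (hWg'd.pow 2))
      refine raw.congr_deriv ?_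
      push_cast
      simp only [Pi.add_apply, Pi.pow_apply]
      ring
    have t3 : HasDerivAt (fun t : ℝ => -(b/2) * ((Wf t)^2 + (Wg t)^2))
        (-b*((Wf s)*(Wf' s) + (Wg s)*(Wg' s))) s := by
      have raw := ((hWfd.pow 2).add (hWgd.pow 2)).const_mul (-(b/2) : ℝ)
      refine raw.congr_deriv ?_
      push_cast
      ring
    have hgt1 : (1:ℝ) < p + 1 := by linarith
    have hgt2 : (1:ℝ) < (p+1)/2 := by linarith
    have t4 : HasDerivAt (fun t : ℝ => (1/(p+1)) * (|Wf t|^(p+1) + |Wg t|^(p+1)))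
        ((|Wf s|^q)^2*(Wf s)^2*(Wf s)*(Wf' s) + (|Wg s|^q)^2*(Wg s)^2*(Wg s)*(Wg' s)) s := by
      have r1 := (hasDerivAt_abs_rpow (Wf s) hgt1).comp s hWfd
      have r2 := (hasDerivAt_abs_rpow (Wg s) hgt1).comp s hWgd
      simp only [Function.comp_def] at r1 r2
      have raw := (r1.add r2).const_mul (1/(p+1) : ℝ)
      refine raw.congr_deriv ?_
      rw [show p+1-2 = 2*q+2 by rw [hpdef]; ring, abs_rpow_split2 hq0, abs_rpow_split2 hq0]
      field_simp
    have t5 : HasDerivAt (fun t : ℝ => (2*β/(p+1)) * |Wf t * Wg t|^((p+1)/2))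
        (β*((|Wf s|^q)*(|Wg s|^q))*((Wf s)*(Wg s))*((Wf' s)*(Wg s) + (Wf s)*(Wg' s))) s := by
      have rp := (hasDerivAt_abs_rpow ((Wf s)*(Wg s)) hgt2).comp s (hWfd.mul hWgd)
      simp only [Function.comp_def] at rp
      have raw := rp.const_mul (2*β/(p+1) : ℝ)
      refine raw.congr_deriv ?_
      rw [show (p+1)/2-2 = q by rw [hpdef]; ring, abs_mul (Wf s) (Wg s),
        Real.mul_rpow (abs_nonneg (Wf s)) (abs_nonneg (Wg s))]
      have hc : 2*β/(p+1)*((p+1)/2) = β := by field_simp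
      linear_combination ((|Wf s|^q*|Wg s|^q)*((Wf s)*(Wg s))*((Wf' s)*(Wg s)+(Wf s)*(Wg' s))) * hc
    have Htot := t1.add ((t3.add t4).add t5)
    have hval : s*((Wf' s)^2+(Wg' s)^2) + s^2*((Wf' s)*wf'' + (Wg' s)*wg'')
        + (-b*((Wf s)*(Wf' s) + (Wg s)*(Wg' s))
           + ((|Wf s|^q)^2*(Wf s)^2*(Wf s)*(Wf' s) + (|Wg s|^q)^2*(Wg s)^2*(Wg s)*(Wg' s))
           + β*((|Wf s|^q)*(|Wg s|^q))*((Wf s)*(Wg s))*((Wf' s)*(Wg s) + (Wf s)*(Wg' s)))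
        = (1-a) * (s * φ s) := by
      rw [hφW s hs]
      have := energy_alg a b s β (Wf s) (Wg s) (Wf' s) (Wg' s) wf'' wg''
        (|Wf s|^q) (|Wg s|^q) hodeWf hodeWg
      linarith [this]
    rw [← hval]
    exact Htot
  -- FTC
  have huIcc : uIcc r ρ = Icc r ρ := uIcc_of_le hrρ.le
  have hpos : ∀ s ∈ uIcc r ρ, (0:ℝ) < s := by
    intro s hsmem
    rw [huIcc] at hsmem
    exact lt_of_lt_of_le hr hsmem.1
  have hcont : ContinuousOn (fun s => (1-a) * (s * φ s)) (uIcc r ρ) := by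
    have hconc : ContinuousOn (fun s => (1-a) * (s * ((Wf' s)^2 + (Wg' s)^2))) (uIcc r ρ) := by
      intro s hsmem
      have hs := hpos s hsmem
      apply ContinuousAt.continuousWithinAt
      have hWf'c : ContinuousAt Wf' s := by
        apply ContinuousAt.add
        · exact ((Real.continuousAt_rpow_const s (α-1) (Or.inl hs.ne')).const_mul α).mul
            hfC.continuous.continuousAt
        · exact (Real.continuousAt_rpow_const s α (Or.inl hs.ne')).mul
            hf'C.continuous.continuousAt
      have hWg'c : ContinuousAt Wg' s := by
        apply ContinuousAt.add
        · exact ((Real.continuousAt_rpow_const s (α-1) (Or.inl hs.ne')).const_mul α).mul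
            hgC.continuous.continuousAt
        · exact (Real.continuousAt_rpow_const s α (Or.inl hs.ne')).mul
            hg'C.continuous.continuousAt
      exact continuousAt_const.mul (continuousAt_id.mul ((hWf'c.pow 2).add (hWg'c.pow 2)))
    apply hconc.congr
    intro s hsmem
    show (1-a) * (s * φ s) = (1-a) * (s * ((Wf' s)^2 + (Wg' s)^2))
    rw [hφW s (hpos s hsmem)]
  have hftc : ∫ s in r..ρ, (1-a) * (s * φ s) = Gc ρ - Gc r :=
    intervalIntegral.integral_eq_sub_of_hasDerivAt
      (fun s hsmem => hGder s (hpos s hsmem)) (hcont.intervalIntegrable)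
  rw [intervalIntegral.integral_const_mul] at hftc
  have h1 := hGval r hr
  have h2 := hGval ρ (hr.trans hrρ)
  linear_combination (-1 : ℝ) * hftc + (-1 : ℝ) * h2 + h1
end
end

section
/- Let a ∈ (0,1), b > 0 and R₀ ≥ 0. Suppose V ∈ C²((R₀,∞)) is positive and bounded and satisfies r²V''(r) + a r V'(r) − b V(r) + F(r) = 0 on (R₀,∞), where F : (R₀,∞) → ℝ satisfies F(r) ≤ 0 for all r > R₀. Then V'(r) < 0 for every r > R₀, and lim_{r→∞} V(r) = 0. -/
open Set Filter

/-- ODE lemma: if `V ∈ C²((R₀,∞))` is positive and bounded and satisfies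
`r²V'' + a r V' - b V + F = 0` on `(R₀,∞)` with `a ∈ (0,1)`, `b > 0` and `F ≤ 0`,
then `V' < 0` on `(R₀,∞)` and `V(r) → 0` as `r → ∞`. -/
theorem stmt16 (a b R₀ : ℝ) (ha0 : 0 < a) (ha1 : a < 1) (hb : 0 < b) (hR₀ : 0 ≤ R₀)
    (V F : ℝ → ℝ)
    (hV : ContDiffOn ℝ 2 V (Ioi R₀))
    (hpos : ∀ r ∈ Ioi R₀, 0 < V r)
    (hbdd : ∃ M : ℝ, ∀ r ∈ Ioi R₀, V r ≤ M)
    (hF : ∀ r ∈ Ioi R₀, F r ≤ 0)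
    (heq : ∀ r ∈ Ioi R₀,
      r ^ 2 * deriv (deriv V) r + a * r * deriv V r - b * V r + F r = 0) :
    (∀ r ∈ Ioi R₀, deriv V r < 0) ∧ Tendsto V atTop (nhds 0) := by
  have hVd1 : ContDiffOn ℝ 1 (deriv V) (Ioi R₀) :=
    hV.deriv_of_isOpen isOpen_Ioi (by norm_num)
  have hdV : ∀ r ∈ Ioi R₀, HasDerivAt V (deriv V r) r := fun r hr =>
    ((hV.differentiableOn (by norm_num)).differentiableAt (isOpen_Ioi.mem_nhds hr)).hasDerivAt
  have hddV : ∀ r ∈ Ioi R₀, HasDerivAt (deriv V) (deriv (deriv V) r) r := fun r hr =>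
    ((hVd1.differentiableOn one_ne_zero).differentiableAt (isOpen_Ioi.mem_nhds hr)).hasDerivAt
  set W : ℝ → ℝ := fun r => r ^ a * deriv V r with hWdef
  have hW : ∀ r ∈ Ioi R₀, HasDerivAt W (r ^ (a - 2) * (b * V r - F r)) r := by
    intro r hr
    have hr0 : 0 < r := hR₀.trans_lt hr
    have h1 : HasDerivAt (fun x : ℝ => x ^ a) (a * r ^ (a - 1)) r :=
      Real.hasDerivAt_rpow_const (Or.inl hr0.ne')
    have h2 := h1.mul (hddV r hr)
    have e1 : r ^ (a - 2) * r ^ (2 : ℕ) = r ^ a := by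
      rw [← Real.rpow_natCast r 2, ← Real.rpow_add hr0]; norm_num
    have e2 : r ^ (a - 2) * r = r ^ (a - 1) := by
      nth_rewrite 2 [← Real.rpow_one r]
      rw [← Real.rpow_add hr0]
      ring_nf
    have key : a * r ^ (a - 1) * deriv V r + r ^ a * deriv (deriv V) r
        = r ^ (a - 2) * (b * V r - F r) := by
      linear_combination (-(a * deriv V r)) * e2 - deriv (deriv V) r * e1
        + r ^ (a - 2) * (heq r hr)
    exact key ▸ h2
  have hWc : ContinuousOn W (Ioi R₀) := fun r hr =>
    ((hW r hr).differentiableAt.continuousAt).continuousWithinAt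
  have hWmono : StrictMonoOn W (Ioi R₀) := by
    apply strictMonoOn_of_deriv_pos (convex_Ioi R₀) hWc
    rw [interior_Ioi]
    intro r hr
    rw [(hW r hr).deriv]
    have hr0 : 0 < r := hR₀.trans_lt hr
    have := hpos r hr
    have := hF r hr
    have : 0 < b * V r - F r := by nlinarith
    positivity
  obtain ⟨M, hM⟩ := hbdd
  have part1 : ∀ r ∈ Ioi R₀, deriv V r < 0 := by
    intro r₁ hr₁
    by_contra hcon
    push_neg at hcon
    have hr₁0 : 0 < r₁ := hR₀.trans_lt hr₁
    have hr₂ : r₁ + 1 ∈ Ioi R₀ := by simp only [mem_Ioi] at *; linarith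
    set r₂ := r₁ + 1 with hr₂def
    set c := W r₂ with hcdef
    have hc : 0 < c := by
      have h0 : (0:ℝ) ≤ W r₁ := by
        have : (0:ℝ) ≤ r₁ ^ a := (Real.rpow_pos_of_pos hr₁0 a).le
        exact mul_nonneg this hcon
      exact h0.trans_lt (hWmono hr₁ hr₂ (by linarith))
    set G : ℝ → ℝ := fun r => c / (1 - a) * r ^ (1 - a) with hGdef
    have hG : ∀ r : ℝ, 0 < r → HasDerivAt G (c * r ^ (-a)) r := by
      intro r hr0
      have h1 : HasDerivAt (fun x : ℝ => x ^ (1 - a)) ((1 - a) * r ^ (1 - a - 1)) r :=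
        Real.hasDerivAt_rpow_const (Or.inl hr0.ne')
      have h2 := h1.const_mul (c / (1 - a))
      have h1a : (1 - a) ≠ 0 := by intro h; linarith
      have : c / (1 - a) * ((1 - a) * r ^ (1 - a - 1)) = c * r ^ (-a) := by
        rw [show (1 - a - 1 : ℝ) = -a by ring]
        field_simp
      exact this ▸ h2
    have hIci : Ici r₂ ⊆ Ioi R₀ := fun x hx => by
      simp only [mem_Ici] at hx; simp only [mem_Ioi] at *; linarith
    have hmono : StrictMonoOn (fun r => V r - G r) (Ici r₂) := by
      apply strictMonoOn_of_deriv_pos (convex_Ici r₂)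
      · intro r hr
        exact (((hdV r (hIci hr)).sub (hG r (by
            have := hIci hr; simp only [mem_Ioi] at this; linarith))).differentiableAt.continuousAt).continuousWithinAt
      · rw [interior_Ici]
        intro r hr
        have hrI : r ∈ Ioi R₀ := hIci (mem_Ici.mpr (le_of_lt hr))
        have hr0 : 0 < r := hR₀.trans_lt hrI
        rw [show deriv (fun r => V r - G r) r = deriv V r - c * r ^ (-a) from
          ((hdV r hrI).sub (hG r hr0)).deriv]
        have hWr : c < W r := hWmono hr₂ hrI hr
        have hra : 0 < r ^ a := Real.rpow_pos_of_pos hr0 a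
        have : c * r ^ (-a) < deriv V r := by
          rw [Real.rpow_neg hr0.le]
          rw [show c * (r ^ a)⁻¹ = c / r ^ a by ring]
          rw [div_lt_iff₀ hra]
          calc c < W r := hWr
            _ = deriv V r * r ^ a := by rw [hWdef]; ring
        linarith
    have hGtop : Tendsto G atTop atTop := by
      apply Tendsto.const_mul_atTop (div_pos hc (by linarith))
      exact tendsto_rpow_atTop (by linarith)
    obtain ⟨r, hr1, hr2⟩ :=
      ((hGtop.eventually_gt_atTop (M - (V r₂ - G r₂))).and (eventually_gt_atTop r₂)).exists
    have h3 : V r₂ - G r₂ < V r - G r := hmono (mem_Ici.mpr le_rfl) (le_of_lt hr2) hr2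
    have h4 : V r ≤ M := hM r (hIci (le_of_lt hr2))
    linarith
  refine ⟨part1, ?_⟩
  have hanti : StrictAntiOn V (Ioi R₀) := by
    apply strictAntiOn_of_deriv_neg (convex_Ioi R₀) hV.continuousOn
    rw [interior_Ioi]; exact part1
  have key : ∀ ε > (0:ℝ), ∃ r ∈ Ioi R₀, V r < ε := by
    intro ε hε
    by_contra hcon
    push_neg at hcon
    set k := b * ε / (1 - a) with hkdef
    have hk0 : 0 < k := div_pos (mul_pos hb hε) (by linarith)
    have hWneg : ∀ r ∈ Ioi R₀, W r < 0 := fun r hr =>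
      mul_neg_of_pos_of_neg (Real.rpow_pos_of_pos (hR₀.trans_lt hr) a) (part1 r hr)
    set H : ℝ → ℝ := fun r => W r + k * r ^ (a - 1) with hHdef
    have hH : ∀ r ∈ Ioi R₀,
        HasDerivAt H (r ^ (a - 2) * (b * V r - F r) + k * ((a - 1) * r ^ (a - 2))) r := by
      intro r hr
      have hr0 : 0 < r := hR₀.trans_lt hr
      have h1 : HasDerivAt (fun x : ℝ => x ^ (a - 1)) ((a - 1) * r ^ (a - 1 - 1)) r :=
        Real.hasDerivAt_rpow_const (Or.inl hr0.ne')
      have h2 := (hW r hr).add (h1.const_mul k)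
      rw [show (a - 1 - 1 : ℝ) = a - 2 by ring] at h2
      exact h2
    have hHmono : MonotoneOn H (Ioi R₀) := by
      apply monotoneOn_of_deriv_nonneg (convex_Ioi R₀)
      · exact fun r hr => ((hH r hr).differentiableAt.continuousAt).continuousWithinAt
      · rw [interior_Ioi]
        exact fun r hr => ((hH r hr).differentiableAt).differentiableWithinAt
      · rw [interior_Ioi]
        intro r hr
        rw [(hH r hr).deriv]
        have hr0 : 0 < r := hR₀.trans_lt hr
        have hra : 0 < r ^ (a - 2) := Real.rpow_pos_of_pos hr0 _
        have h5 : ε ≤ V r := hcon r hr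
        have h6 : F r ≤ 0 := hF r hr
        have h1a : (1 - a) ≠ 0 := by intro h; linarith
        have hka : k * (a - 1) = -(b * ε) := by
          rw [hkdef]; field_simp; ring
        have : r ^ (a - 2) * (b * V r - F r) + k * ((a - 1) * r ^ (a - 2))
            = r ^ (a - 2) * (b * V r - F r - b * ε) := by
          rw [show k * ((a - 1) * r ^ (a - 2)) = k * (a-1) * r ^ (a-2) by ring, hka]; ring
        rw [this]
        have : 0 ≤ b * V r - F r - b * ε := by nlinarith
        positivity
    -- W r₀ ≤ -k * r₀^(a-1)
    have hWle : ∀ r₀ ∈ Ioi R₀, W r₀ ≤ -k * r₀ ^ (a - 1) := by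
      intro r₀ hr₀
      have hlim : Tendsto (fun r : ℝ => k * r ^ (a - 1)) atTop (nhds 0) := by
        have := (tendsto_rpow_neg_atTop (by linarith : (0:ℝ) < 1 - a)).const_mul k
        rw [mul_zero] at this
        convert this using 2 with r
        rw [show (a - 1 : ℝ) = -(1 - a) by ring]
      have hev : ∀ᶠ r in atTop, H r₀ ≤ k * r ^ (a - 1) := by
        filter_upwards [eventually_ge_atTop r₀, eventually_gt_atTop R₀] with r h1 h2
        have : H r₀ ≤ H r := hHmono hr₀ h2 h1
        have := hWneg r h2
        simp only [hHdef] at *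
        linarith
      have := ge_of_tendsto hlim hev
      simp only [hHdef] at this ⊢
      linarith
    have hdVle : ∀ r ∈ Ioi R₀, deriv V r ≤ -(k / r) := by
      intro r hr
      have hr0 : 0 < r := hR₀.trans_lt hr
      have hra : 0 < r ^ a := Real.rpow_pos_of_pos hr0 a
      have h1 := hWle r hr
      have e3 : -k * r ^ (a - 1) = (-(k / r)) * r ^ a := by
        rw [show (a - 1 : ℝ) = a + (-1) by ring, Real.rpow_add hr0,
          Real.rpow_neg_one]
        field_simp
      rw [e3, hWdef] at h1
      have h2 : deriv V r * r ^ a ≤ (-(k / r)) * r ^ a := by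
        calc deriv V r * r ^ a = r ^ a * deriv V r := by ring
          _ ≤ (-(k / r)) * r ^ a := h1
      exact le_of_mul_le_mul_right h2 hra
    set J : ℝ → ℝ := fun r => V r + k * Real.log r with hJdef
    have hJanti : AntitoneOn J (Ioi R₀) := by
      apply antitoneOn_of_deriv_nonpos (convex_Ioi R₀)
      · intro r hr
        have hr0 : 0 < r := hR₀.trans_lt hr
        exact (((hdV r hr).add ((Real.hasDerivAt_log hr0.ne').const_mul k)).differentiableAt.continuousAt).continuousWithinAt
      · rw [interior_Ioi]
        intro r hr
        have hr0 : 0 < r := hR₀.trans_lt hr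
        exact ((hdV r hr).add ((Real.hasDerivAt_log hr0.ne').const_mul k)).differentiableAt.differentiableWithinAt
      · rw [interior_Ioi]
        intro r hr
        have hr0 : 0 < r := hR₀.trans_lt hr
        rw [show deriv J r = deriv V r + k * r⁻¹ from
          ((hdV r hr).add ((Real.hasDerivAt_log hr0.ne').const_mul k)).deriv]
        have h1 := hdVle r hr
        have : k * r⁻¹ = k / r := by ring
        rw [this]
        linarith
    set r₁ := R₀ + 1 with hr₁def
    have hr₁ : r₁ ∈ Ioi R₀ := by simp [hr₁def]
    have hlog : Tendsto (fun r : ℝ => k * Real.log r) atTop atTop :=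
      Tendsto.const_mul_atTop hk0 Real.tendsto_log_atTop
    obtain ⟨r, h1, h2⟩ :=
      ((hlog.eventually_gt_atTop (V r₁ + k * Real.log r₁)).and (eventually_gt_atTop r₁)).exists
    have hrI : r ∈ Ioi R₀ := by simp only [mem_Ioi] at *; linarith
    have h3 : J r ≤ J r₁ := hJanti hr₁ hrI (le_of_lt h2)
    have h4 : 0 < V r := hpos r hrI
    simp only [hJdef] at h3
    linarith
  rw [Metric.tendsto_atTop]
  intro ε hε
  obtain ⟨r₁, hr₁, hV1⟩ := key ε hε
  refine ⟨r₁, fun r hr => ?_⟩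
  have hrI : r ∈ Ioi R₀ := by simp only [mem_Ioi] at *; linarith
  have h1 : V r ≤ V r₁ := hanti.antitoneOn hr₁ hrI hr
  have h2 : 0 < V r := hpos r hrI
  rw [Real.dist_eq, sub_zero, abs_of_pos h2]
  linarith
end

section
/- Let a ∈ (0,1) and R₀ ≥ 0. Suppose V ∈ C²((R₀,∞)) is positive and bounded with V'(r) < 0 on (R₀,∞) and V(r) → 0 as r → ∞, and suppose there exist R₁ > R₀ and a positive nonincreasing function f on (R₁,∞) with f(r) → 0 as r → ∞ such that 0 < r²V''(r) + a r V'(r) < f(r) for all r > R₁. Then r V'(r) → 0 as r → ∞; in particular V(r) + r|V'(r)| = o(1) as r → ∞. -/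
open Set Filter

/-- ODE decay lemma: if `V ∈ C²((R₀,∞))` is positive, bounded, strictly decreasing
(`V' < 0`) with `V(r) → 0`, and there are `R₁ > R₀` and a positive nonincreasing
function `f` on `(R₁,∞)` with `f(r) → 0` such that `0 < r²V'' + a r V' < f(r)` for
`r > R₁` (where `a ∈ (0,1)`), then `r V'(r) → 0` as `r → ∞`; in particular
`V(r) + r|V'(r)| = o(1)` as `r → ∞`. -/
theorem stmt17 (a R₀ R₁ : ℝ) (ha0 : 0 < a) (ha1 : a < 1) (hR₀ : 0 ≤ R₀) (hR₁ : R₀ < R₁)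
    (V f : ℝ → ℝ)
    (hV : ContDiffOn ℝ 2 V (Ioi R₀))
    (hpos : ∀ r ∈ Ioi R₀, 0 < V r)
    (hbdd : ∃ M : ℝ, ∀ r ∈ Ioi R₀, V r ≤ M)
    (hdec : ∀ r ∈ Ioi R₀, deriv V r < 0)
    (hlim : Tendsto V atTop (nhds 0))
    (hfpos : ∀ r ∈ Ioi R₁, 0 < f r)
    (hfmono : ∀ r ∈ Ioi R₁, ∀ s ∈ Ioi R₁, r ≤ s → f s ≤ f r)
    (hflim : Tendsto f atTop (nhds 0))
    (hineq : ∀ r ∈ Ioi R₁,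
      0 < r ^ 2 * deriv (deriv V) r + a * r * deriv V r ∧
      r ^ 2 * deriv (deriv V) r + a * r * deriv V r < f r) :
    Tendsto (fun r => r * deriv V r) atTop (nhds 0) ∧
    Tendsto (fun r => V r + r * |deriv V r|) atTop (nhds 0) := by
  have hR₁0 : 0 < R₁ := lt_of_le_of_lt hR₀ hR₁
  have h1a : 0 < 1 - a := by linarith
  -- differentiability facts
  have hVdiff : DifferentiableOn ℝ V (Ioi R₀) := hV.differentiableOn (by norm_num)
  have hdV : ∀ r ∈ Ioi R₀, HasDerivAt V (deriv V r) r := fun r hr =>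
    (hVdiff.differentiableAt (isOpen_Ioi.mem_nhds hr)).hasDerivAt
  have hV' : ContDiffOn ℝ 1 (deriv V) (Ioi R₀) :=
    hV.deriv_of_isOpen isOpen_Ioi (by norm_num)
  have hV'diff : DifferentiableOn ℝ (deriv V) (Ioi R₀) := hV'.differentiableOn (by norm_num)
  have hdV' : ∀ r ∈ Ioi R₀, HasDerivAt (deriv V) (deriv (deriv V) r) r := fun r hr =>
    (hV'diff.differentiableAt (isOpen_Ioi.mem_nhds hr)).hasDerivAt
  set W : ℝ → ℝ := fun r => r ^ a * deriv V r with hWdef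
  set W' : ℝ → ℝ := fun r => a * r ^ (a - 1) * deriv V r + r ^ a * deriv (deriv V) r
    with hW'def
  have hdW : ∀ r ∈ Ioi R₀, HasDerivAt W (W' r) r := by
    intro r hr
    have hr0 : 0 < r := lt_of_le_of_lt hR₀ hr
    have h1 : HasDerivAt (fun t : ℝ => t ^ a) (a * r ^ (a - 1)) r :=
      Real.hasDerivAt_rpow_const (Or.inl hr0.ne')
    have h2 := h1.mul (hdV' r hr)
    exact h2
  -- key algebraic identity and bounds for W'
  have hW'bnd : ∀ r ∈ Ioi R₁, 0 < W' r ∧ W' r ≤ r ^ (a - 2) * f r := by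
    intro r hr
    have hrpos : 0 < r := lt_trans hR₁0 hr
    have e1 : r ^ (a - 2) * r ^ (2 : ℕ) = r ^ a := by
      rw [← Real.rpow_natCast r 2, ← Real.rpow_add hrpos]
      norm_num
    have e2 : r ^ (a - 2) * r = r ^ (a - 1) := by
      rw [show r ^ (a - 2) * r = r ^ (a - 2) * r ^ (1 : ℝ) by rw [Real.rpow_one],
        ← Real.rpow_add hrpos]
      congr 1; ring
    have hid : W' r = r ^ (a - 2) *
        (r ^ 2 * deriv (deriv V) r + a * r * deriv V r) := by
      have expand : r ^ (a - 2) * (r ^ 2 * deriv (deriv V) r + a * r * deriv V r)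
          = (r ^ (a - 2) * r ^ (2 : ℕ)) * deriv (deriv V) r
            + a * (r ^ (a - 2) * r) * deriv V r := by ring
      rw [hW'def, expand, e1, e2]; ring
    have hp : 0 < r ^ (a - 2) := Real.rpow_pos_of_pos hrpos _
    obtain ⟨h₁, h₂⟩ := hineq r hr
    refine ⟨by rw [hid]; exact mul_pos hp h₁, ?_⟩
    rw [hid]
    exact le_of_lt (mul_lt_mul_of_pos_left h₂ hp)
  -- comparison: W s - W r ≤ f r * r^(a-1)/(1-a) for R₁ < r ≤ s
  have hcomp : ∀ r ∈ Ioi R₁, ∀ s, r ≤ s → W s - W r ≤ f r * r ^ (a - 1) / (1 - a) := by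
    intro r hr s hrs
    have hfr : 0 < f r := hfpos r hr
    set ψ : ℝ → ℝ := fun t => W t + f r * t ^ (a - 1) / (1 - a) with hψdef
    have hdψ : ∀ t ∈ Ioi R₁, HasDerivAt ψ (W' t - f r * t ^ (a - 2)) t := by
      intro t ht
      have ht0 : 0 < t := lt_trans hR₁0 ht
      have h2 : HasDerivAt (fun t : ℝ => f r * t ^ (a - 1) / (1 - a))
          (f r * ((a - 1) * t ^ (a - 1 - 1)) / (1 - a)) t :=
        ((Real.hasDerivAt_rpow_const (p := a - 1) (Or.inl ht0.ne')).const_mul (f r)).div_const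
          (1 - a)
      have h3 := (hdW t (lt_trans hR₁ ht)).add h2
      have heq : W' t + f r * ((a - 1) * t ^ (a - 1 - 1)) / (1 - a)
          = W' t - f r * t ^ (a - 2) := by
        rw [show a - 1 - 1 = a - 2 by ring]
        field_simp
        ring
      rw [heq] at h3
      exact h3
    have hanti : AntitoneOn ψ (Icc r s) := by
      apply antitoneOn_of_deriv_nonpos (convex_Icc r s)
      · intro t ht
        exact ((hdψ t (lt_of_lt_of_le hr ht.1)).continuousAt).continuousWithinAt
      · intro t ht
        rw [interior_Icc] at ht
        exact ((hdψ t (lt_trans hr ht.1)).differentiableAt).differentiableWithinAt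
      · intro t ht
        rw [interior_Icc] at ht
        have ht' : t ∈ Ioi R₁ := lt_trans hr ht.1
        rw [(hdψ t ht').deriv]
        have hft : f t ≤ f r := hfmono r hr t ht' (le_of_lt ht.1)
        have hp : (0:ℝ) ≤ t ^ (a - 2) := (Real.rpow_pos_of_pos (lt_trans hR₁0 ht') _).le
        have hb := (hW'bnd t ht').2
        nlinarith [mul_le_mul_of_nonneg_left hft hp]
    have hψs : ψ s ≤ ψ r := hanti ⟨le_refl r, hrs⟩ ⟨hrs, le_refl s⟩ hrs
    have hs0 : 0 < s := lt_of_lt_of_le (lt_trans hR₁0 hr) hrs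
    have hQ : 0 ≤ f r * s ^ (a - 1) / (1 - a) :=
      div_nonneg (mul_nonneg hfr.le (Real.rpow_nonneg hs0.le _)) h1a.le
    simp only [hψdef] at hψs
    linarith
  -- bounds on V
  obtain ⟨M, hM⟩ := hbdd
  set M' : ℝ := max M 1 with hM'def
  have hM'1 : (1 : ℝ) ≤ M' := le_max_right _ _
  have hM'0 : (0 : ℝ) < M' := lt_of_lt_of_le one_pos hM'1
  have hMbound : ∀ r ∈ Ioi R₀, V r ≤ M' := fun r hr => le_trans (hM r hr) (le_max_left _ _)
  -- key bound: -W r ≤ f r * r^(a-1)/(1-a)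
  have hkey : ∀ r ∈ Ioi R₁, -W r ≤ f r * r ^ (a - 1) / (1 - a) := by
    intro r hr
    refine le_of_forall_pos_le_add ?_
    intro ε hε
    have htend : Tendsto (fun s : ℝ => 2 ^ a * M' * s ^ (a - 1)) atTop (nhds 0) := by
      have h := (tendsto_rpow_neg_atTop h1a).const_mul (2 ^ a * M')
      simpa [show -(1 - a) = a - 1 by ring] using h
    have hev : ∀ᶠ s : ℝ in atTop, 2 ^ a * M' * s ^ (a - 1) < ε :=
      htend.eventually (gt_mem_nhds hε)
    obtain ⟨s₀, hs₀ε, hs₀r⟩ := (hev.and (eventually_ge_atTop r)).exists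
    have hs₀R₁ : R₁ < s₀ := lt_of_lt_of_le hr hs₀r
    have hs₀0 : 0 < s₀ := lt_trans hR₁0 hs₀R₁
    have hlt : s₀ < 2 * s₀ := by linarith
    have hIcc : Icc s₀ (2 * s₀) ⊆ Ioi R₀ := fun t ht =>
      lt_of_lt_of_le (lt_trans hR₁ hs₀R₁) ht.1
    have hcont : ContinuousOn V (Icc s₀ (2 * s₀)) := fun t ht =>
      ((hdV t (hIcc ht)).continuousAt).continuousWithinAt
    have hdiff : ∀ x ∈ Ioo s₀ (2 * s₀), HasDerivAt V (deriv V x) x := fun x hx =>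
      hdV x (hIcc ⟨hx.1.le, hx.2.le⟩)
    obtain ⟨ξ, hξ, hslope⟩ := exists_hasDerivAt_eq_slope V (deriv V) hlt hcont hdiff
    have hξR₀ : ξ ∈ Ioi R₀ := hIcc ⟨hξ.1.le, hξ.2.le⟩
    have hξ0 : 0 < ξ := lt_trans hs₀0 hξ.1
    have hV2pos : 0 < V (2 * s₀) := hpos _ (hIcc ⟨hlt.le, le_refl _⟩)
    have hVs₀ : V s₀ ≤ M' := hMbound _ (hIcc ⟨le_refl _, hlt.le⟩)
    have hd : -deriv V ξ ≤ M' / s₀ := by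
      have h1 : -deriv V ξ = (V s₀ - V (2 * s₀)) / s₀ := by
        rw [hslope, show 2 * s₀ - s₀ = s₀ by ring]; ring
      rw [h1]
      exact (div_le_div_iff_of_pos_right hs₀0).2 (by linarith)
    have hξa : ξ ^ a ≤ (2 * s₀) ^ a :=
      Real.rpow_le_rpow hξ0.le hξ.2.le ha0.le
    have h2s : (2 * s₀ : ℝ) ^ a = 2 ^ a * s₀ ^ a :=
      Real.mul_rpow (by norm_num) hs₀0.le
    have hWξ : -W ξ ≤ 2 ^ a * M' * s₀ ^ (a - 1) := by
      have hdξ : 0 < -deriv V ξ := neg_pos.2 (hdec ξ hξR₀)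
      have e5 : s₀ ^ (a - 1) = s₀ ^ a / s₀ := by
        rw [Real.rpow_sub hs₀0, Real.rpow_one]
      have step : ξ ^ a * (-deriv V ξ) ≤ (2 * s₀) ^ a * (M' / s₀) :=
        mul_le_mul hξa hd hdξ.le (Real.rpow_nonneg (by positivity) _)
      calc -W ξ = ξ ^ a * (-deriv V ξ) := by simp only [hWdef]; ring
        _ ≤ (2 * s₀) ^ a * (M' / s₀) := step
        _ = 2 ^ a * M' * s₀ ^ (a - 1) := by rw [h2s, e5]; ring
    have hc := hcomp r hr ξ (le_trans hs₀r hξ.1.le)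
    linarith
  -- squeeze to get r V'(r) → 0
  have hmain : Tendsto (fun r => r * deriv V r) atTop (nhds 0) := by
    have hlow : ∀ᶠ r in atTop, -(f r / (1 - a)) ≤ r * deriv V r := by
      filter_upwards [eventually_gt_atTop R₁] with r hr
      have hr0 : 0 < r := lt_trans hR₁0 hr
      have h := mul_le_mul_of_nonneg_left (hkey r hr) (Real.rpow_nonneg hr0.le (1 - a))
      have e3 : r ^ (1 - a) * r ^ a = r := by
        rw [← Real.rpow_add hr0, show 1 - a + a = 1 by ring, Real.rpow_one]
      have e4 : r ^ (1 - a) * r ^ (a - 1) = 1 := by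
        rw [← Real.rpow_add hr0, show 1 - a + (a - 1) = 0 by ring, Real.rpow_zero]
      have lhs : r ^ (1 - a) * -W r = -(r * deriv V r) := by
        simp only [hWdef]
        calc r ^ (1 - a) * -(r ^ a * deriv V r)
            = -((r ^ (1 - a) * r ^ a) * deriv V r) := by ring
          _ = -(r * deriv V r) := by rw [e3]
      have rhs : r ^ (1 - a) * (f r * r ^ (a - 1) / (1 - a)) = f r / (1 - a) := by
        calc r ^ (1 - a) * (f r * r ^ (a - 1) / (1 - a))
            = (r ^ (1 - a) * r ^ (a - 1)) * (f r / (1 - a)) := by ring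
          _ = f r / (1 - a) := by rw [e4]; ring
      rw [lhs, rhs] at h
      linarith
    have hupp : ∀ᶠ r in atTop, r * deriv V r ≤ 0 := by
      filter_upwards [eventually_gt_atTop R₀] with r hr
      exact (mul_neg_of_pos_of_neg (lt_of_le_of_lt hR₀ hr) (hdec r hr)).le
    have hg : Tendsto (fun r => -(f r / (1 - a))) atTop (nhds 0) := by
      have h := (hflim.div_const (1 - a)).neg
      simpa using h
    exact tendsto_of_tendsto_of_tendsto_of_le_of_le' hg tendsto_const_nhds hlow hupp
  refine ⟨hmain, ?_⟩
  have hsub : Tendsto (fun r => V r - r * deriv V r) atTop (nhds 0) := by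
    have h := hlim.sub hmain
    simpa using h
  apply hsub.congr'
  filter_upwards [eventually_gt_atTop R₀] with r hr
  rw [abs_of_neg (hdec r hr)]; ring
end
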